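/- Let C be a monoidal category, σ a pre-braiding in C, and F = {F_{A,B} ∈ Aut_C(A⊗B)} a cocycle (i.e. F_{A⊗B,C} ∘ (F_{A,B} ⊗ id_C) = F_{A,B⊗C} ∘ (id_A ⊗ F_{B,C}) and F_{A,1} = id = F_{1,A}) that respects morphisms of the subcategory C_σ (i.e. F ∘ (f⊗g) = (f⊗g) ∘ F for f, g ∈ Hom C_σ). Then the family σ̄_{A,B} := F_{B,A}⁻¹ ∘ σ_{A,B} ∘ F_{A,B} satisfies the Yang–Baxter equation: σ̄_{A,B}σ̄_{A,C}σ̄_{B,C} = σ̄_{B,C}σ̄_{A,C}σ̄_{A,B} (with appropriate identity tensor factors inserted). -/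

import Mathlib

/-!
STATEMENT 7: Let `C` be a monoidal category, `σ` a pre-braiding in `C`, and
`F = {F_{A,B} ∈ Aut(A⊗B)}` a cocycle (normalized, satisfying the cocycle condition)
that respects morphisms of the subcategory `C_σ`.  Then the family
`σ̄_{A,B} := F_{B,A}⁻¹ ∘ σ_{A,B} ∘ F_{A,B}` satisfies the Yang–Baxter equation.
-/

open CategoryTheory MonoidalCategory

universe v u

variable {C : Type u} [Category.{v} C] [MonoidalCategory C]

/-- The membership predicate for morphisms of the subcategory `C_σ`. -/
def IsSigmaMor (σ : ∀ A B : C, A ⊗ B ≅ B ⊗ A) {A B : C} (f : A ⟶ B) : Prop :=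
  ∀ X : C, ((f ▷ X) ≫ (σ B X).hom = (σ A X).hom ≫ (X ◁ f)) ∧
    ((X ◁ f) ≫ (σ X B).hom = (σ X A).hom ≫ (f ▷ X))

/-- The Yang–Baxter equation for a family of morphisms `s_{A,B} : A⊗B ⟶ B⊗A`. -/
def SatisfiesYBhom (s : ∀ A B : C, A ⊗ B ⟶ B ⊗ A) : Prop :=
  ∀ A B X : C,
    ((s A B) ▷ X) ≫ (α_ B A X).hom ≫ (B ◁ (s A X)) ≫ (α_ B X A).inv ≫
        ((s B X) ▷ A) ≫ (α_ X B A).hom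
      = (α_ A B X).hom ≫ (A ◁ (s B X)) ≫ (α_ A X B).inv ≫ ((s A X) ▷ B) ≫
          (α_ X A B).hom ≫ (X ◁ (s A B))

/-- The two hexagon identities for a family `σ`. -/
def SatisfiesHexagons (σ : ∀ A B : C, A ⊗ B ≅ B ⊗ A) : Prop :=
  (∀ A B X : C, (σ (A ⊗ B) X).hom
      = (α_ A B X).hom ≫ (A ◁ (σ B X).hom) ≫ (α_ A X B).inv ≫ ((σ A X).hom ▷ B) ≫
          (α_ X A B).hom) ∧
  (∀ X A B : C, (σ X (A ⊗ B)).hom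
      = (α_ X A B).inv ≫ ((σ X A).hom ▷ B) ≫ (α_ A X B).hom ≫ (A ◁ (σ X B).hom) ≫
          (α_ A B X).inv)

/-- If `a` intertwines two automorphisms, it also intertwines their inverses. -/
lemma conj_inv_comm {X Y : C} (e : X ≅ X) (e' : Y ≅ Y) (a : X ⟶ Y)
    (h : a ≫ e'.hom = e.hom ≫ a) : e.inv ≫ a = a ≫ e'.inv := by
  rw [Iso.inv_comp_eq, ← Category.assoc, ← h, Category.assoc, e'.hom_inv_id,
    Category.comp_id]

theorem statement7 (σ : ∀ A B : C, A ⊗ B ≅ B ⊗ A)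
    (hYB : SatisfiesYBhom (fun A B => (σ A B).hom)) (hHex : SatisfiesHexagons σ)
    (F : ∀ A B : C, A ⊗ B ≅ A ⊗ B)
    -- the cocycle condition (with the associator inserted):
    (hcoc : ∀ A B X : C,
      ((F A B).hom ▷ X) ≫ (F (A ⊗ B) X).hom ≫ (α_ A B X).hom
        = (α_ A B X).hom ≫ (A ◁ (F B X).hom) ≫ (F A (B ⊗ X)).hom)
    -- normalization:
    (hnorm : ∀ A : C, (F A (𝟙_ C)).hom = 𝟙 _ ∧ (F (𝟙_ C) A).hom = 𝟙 _)
    -- `F` respects morphisms of `C_σ`: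
    (hresp : ∀ {A B A' B' : C} (f : A ⟶ A') (g : B ⟶ B'),
      IsSigmaMor σ f → IsSigmaMor σ g →
      (f ⊗ₘ g) ≫ (F A' B').hom = (F A B).hom ≫ (f ⊗ₘ g)) :
    SatisfiesYBhom (fun A B => (F A B).hom ≫ (σ A B).hom ≫ (F B A).inv) := by
  -- identities belong to `C_σ`
  have hid : ∀ A : C, IsSigmaMor σ (𝟙 A) := by
    intro A X
    constructor <;> simp
  -- each `σ A B` belongs to `C_σ`
  have hσm : ∀ A B : C, IsSigmaMor σ (σ A B).hom := by
    intro A B X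
    constructor
    · rw [hHex.1 A B X, hHex.1 B A X]
      simpa only [Category.assoc] using hYB A B X
    · rw [hHex.2 X A B, hHex.2 X B A]
      rw [← cancel_epi (α_ X A B).hom, ← cancel_mono (α_ B A X).hom]
      simp only [Category.assoc, Iso.inv_hom_id, Category.comp_id,
        Iso.hom_inv_id_assoc]
      simpa only [Category.assoc] using (hYB X A B).symm
  -- `F` commutes with right-whiskered `σ`'s
  have hR : ∀ (A B X : C),
      ((σ A B).hom ▷ X) ≫ (F (B ⊗ A) X).hom = (F (A ⊗ B) X).hom ≫ ((σ A B).hom ▷ X) := by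
    intro A B X
    have := hresp (σ A B).hom (𝟙 X) (hσm A B) (hid X)
    simpa only [tensorHom_id] using this
  have hL : ∀ (X A B : C),
      (X ◁ (σ A B).hom) ≫ (F X (B ⊗ A)).hom = (F X (A ⊗ B)).hom ≫ (X ◁ (σ A B).hom) := by
    intro X A B
    have := hresp (𝟙 X) (σ A B).hom (hid X) (hσm A B)
    simpa only [id_tensorHom] using this
  intro A B X
  dsimp only
  -- key cocycle rearrangements
  have h1 : (F B A).inv ▷ X ≫ (α_ B A X).hom ≫ B ◁ (F A X).hom
      = (F (B ⊗ A) X).hom ≫ (α_ B A X).hom ≫ (F B (A ⊗ X)).inv := by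
    rw [← cancel_epi ((F B A).hom ▷ X), ← cancel_mono (F B (A ⊗ X)).hom]
    simp only [Category.assoc, Iso.inv_hom_id, Category.comp_id]
    rw [← MonoidalCategory.comp_whiskerRight_assoc, Iso.hom_inv_id,
      MonoidalCategory.id_whiskerRight, Category.id_comp]
    exact (hcoc B A X).symm
  have h4 : (F B (X ⊗ A)).inv ≫ B ◁ (F X A).inv ≫ (α_ B X A).inv ≫ (F B X).hom ▷ A
      = (α_ B X A).inv ≫ (F (B ⊗ X) A).inv := by
    rw [← cancel_epi (F B (X ⊗ A)).hom, ← cancel_mono (F (B ⊗ X) A).hom]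
    simp only [Category.assoc, Iso.inv_hom_id, Category.comp_id, Iso.hom_inv_id_assoc]
    rw [← cancel_epi (B ◁ (F X A).hom)]
    rw [← MonoidalCategory.whiskerLeft_comp_assoc, Iso.hom_inv_id,
      MonoidalCategory.whiskerLeft_id, Category.id_comp]
    rw [← cancel_epi (α_ B X A).hom]
    simp only [Iso.hom_inv_id_assoc]
    rw [← cancel_mono (α_ B X A).hom]
    simpa only [Category.assoc, Iso.inv_hom_id, Category.comp_id] using hcoc B X A
  have h6 : (F (X ⊗ B) A).inv ≫ (F X B).inv ▷ A ≫ (α_ X B A).hom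
      = (α_ X B A).hom ≫ (F X (B ⊗ A)).inv ≫ X ◁ (F B A).inv := by
    rw [← cancel_epi ((F X B).hom ▷ A ≫ (F (X ⊗ B) A).hom)]
    simp only [Category.assoc, Iso.hom_inv_id_assoc]
    rw [← MonoidalCategory.comp_whiskerRight_assoc, Iso.hom_inv_id,
      MonoidalCategory.id_whiskerRight, Category.id_comp]
    rw [reassoc_of% hcoc X B A]
    simp
  have k1 : (α_ A B X).hom ≫ A ◁ (F B X).hom
      = (F A B).hom ▷ X ≫ (F (A ⊗ B) X).hom ≫ (α_ A B X).hom ≫ (F A (B ⊗ X)).inv := by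
    rw [← cancel_mono (F A (B ⊗ X)).hom]
    simp only [Category.assoc, Iso.inv_hom_id, Category.comp_id]
    exact (hcoc A B X).symm
  have k3 : (F A (X ⊗ B)).inv ≫ A ◁ (F X B).inv ≫ (α_ A X B).inv ≫ (F A X).hom ▷ B
      = (α_ A X B).inv ≫ (F (A ⊗ X) B).inv := by
    rw [← cancel_epi (F A (X ⊗ B)).hom, ← cancel_mono (F (A ⊗ X) B).hom]
    simp only [Category.assoc, Iso.inv_hom_id, Category.comp_id, Iso.hom_inv_id_assoc]
    rw [← cancel_epi (A ◁ (F X B).hom)]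
    rw [← MonoidalCategory.whiskerLeft_comp_assoc, Iso.hom_inv_id,
      MonoidalCategory.whiskerLeft_id, Category.id_comp]
    rw [← cancel_epi (α_ A X B).hom]
    simp only [Iso.hom_inv_id_assoc]
    rw [← cancel_mono (α_ A X B).hom]
    simpa only [Category.assoc, Iso.inv_hom_id, Category.comp_id] using hcoc A X B
  have k5 : (F (X ⊗ A) B).inv ≫ (F X A).inv ▷ B ≫ (α_ X A B).hom
      = (α_ X A B).hom ≫ (F X (A ⊗ B)).inv ≫ X ◁ (F A B).inv := by
    rw [← cancel_epi ((F X A).hom ▷ B ≫ (F (X ⊗ A) B).hom)]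
    simp only [Category.assoc, Iso.hom_inv_id_assoc]
    rw [← MonoidalCategory.comp_whiskerRight_assoc, Iso.hom_inv_id,
      MonoidalCategory.id_whiskerRight, Category.id_comp]
    rw [reassoc_of% hcoc X A B]
    simp
  -- commutation with inverses
  have h3 : (F B (A ⊗ X)).inv ≫ B ◁ (σ A X).hom = B ◁ (σ A X).hom ≫ (F B (X ⊗ A)).inv :=
    conj_inv_comm _ _ _ (hL B A X)
  have h5 : (F (B ⊗ X) A).inv ≫ (σ B X).hom ▷ A
      = (σ B X).hom ▷ A ≫ (F (X ⊗ B) A).inv :=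
    conj_inv_comm _ _ _ (hR B X A)
  have k2 : (F A (B ⊗ X)).inv ≫ A ◁ (σ B X).hom = A ◁ (σ B X).hom ≫ (F A (X ⊗ B)).inv :=
    conj_inv_comm _ _ _ (hL A B X)
  have k4 : (F (A ⊗ X) B).inv ≫ (σ A X).hom ▷ B
      = (σ A X).hom ▷ B ≫ (F (X ⊗ A) B).inv :=
    conj_inv_comm _ _ _ (hR A X B)
  have k7 : (F X (A ⊗ B)).inv ≫ X ◁ (σ A B).hom = X ◁ (σ A B).hom ≫ (F X (B ⊗ A)).inv :=
    conj_inv_comm _ _ _ (hL X A B)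
  simp only [MonoidalCategory.comp_whiskerRight, MonoidalCategory.whiskerLeft_comp,
    Category.assoc]
  -- LHS telescoping
  slice_lhs 3 5 => rw [h1]
  slice_lhs 2 3 => rw [hR A B X]
  slice_lhs 5 6 => rw [h3]
  slice_lhs 6 9 => rw [h4]
  slice_lhs 7 8 => rw [h5]
  slice_lhs 8 10 => rw [h6]
  -- RHS telescoping
  slice_rhs 1 2 => rw [k1]
  slice_rhs 4 5 => rw [k2]
  slice_rhs 5 8 => rw [k3]
  slice_rhs 6 7 => rw [k4]
  slice_rhs 7 9 => rw [k5]
  simp only [Category.assoc, MonoidalCategory.whiskerLeft_inv_hom_assoc]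
  slice_rhs 8 9 => rw [k7]
  -- conclude with the Yang–Baxter equation for σ
  slice_lhs 3 8 => rw [hYB A B X]
  simp only [Category.assoc]
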